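/- arXiv:1802.02547 — 2 statements merged into one kernel-verified Lean document; each statement's English description precedes it below -/
import Mathlib

section
/- Let n₁, n₂, r₁, r₂, d₁, d₂ be positive integers with 1 ≤ d₁ ≤ r₁, 1 ≤ d₂ ≤ r₂, n₁ ≥ 2r₁ − 1, n₂ ≥ 2r₂ − 1, and k₁ = ⌊(n₁−r₁)/d₁⌋ + 1, k₂ = ⌊(n₂−r₂)/d₂⌋ + 1. Let Q = Σ_{i,p=1}^{k₁} Σ_{j,q=1}^{k₂} Q_{(i,j)}·Q_{(p,q)}ᵀ where Q_{(i,j)} are the 2D patch-and-stride selection matrices. Let p₁ = ⌊(r₁−1)/d₁⌋ and p₂ = ⌊(r₂−1)/d₂⌋. Then the minimum eigenvalue of Q satisfies λ_min(Q) ≥ 1/4, and the maximum eigenvalue satisfies λ_max(Q) ≤ k₁·(p₁+1)·k₂·(p₂+1). -/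
open Matrix Finset
open scoped Kronecker

noncomputable section

/-- The `i`-th selection matrix of the 1D patch-and-stride structure with image size `n`,
patch size `r` and stride `d` (0-based indices): `(Pᵢ)_{a,b} = 1` iff `b = i·d + a`. -/
def patch1D (n r d : ℕ) (i : Fin ((n - r) / d + 1)) : Matrix (Fin r) (Fin n) ℝ :=
  Matrix.of fun a b => if (b : ℕ) = i.1 * d + a.1 then 1 else 0

/-- The 1D patch matrix `P = ∑_{i,j} Pᵢ Pⱼᵀ`. -/
def patchMat1D (n r d : ℕ) : Matrix (Fin r) (Fin r) ℝ :=
  ∑ i, ∑ j, patch1D n r d i * (patch1D n r d j)ᵀ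

/-- The row-major index bijection `{0,…,m−1} × {0,…,n−1} → {0,…,mn−1}`. -/
def rowMajor (m n : ℕ) (x : Fin m × Fin n) : Fin (m * n) :=
  ⟨x.1.1 * n + x.2.1, by
    have h1 : x.1.1 * n + x.2.1 < x.1.1 * n + n := Nat.add_lt_add_left x.2.2 _
    have h2 : x.1.1 * n + n = (x.1.1 + 1) * n := (Nat.succ_mul _ _).symm
    have h3 : (x.1.1 + 1) * n ≤ m * n := Nat.mul_le_mul_right _ x.1.2
    exact lt_of_lt_of_le (h2 ▸ h1) h3⟩

/-- The `(i,j)`-th selection matrix of the 2D patch-and-stride structure with image size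
`n₁ × n₂`, patch size `r₁ × r₂` and strides `d₁, d₂`, acting on row-major vectorized
images (0-based indices): `(Q_{(i,j)})_{a,b} = 1` iff `a = p·r₂ + q` and
`b = (i·d₁ + p)·n₂ + j·d₂ + q` for some `0 ≤ p < r₁`, `0 ≤ q < r₂`. -/
def patch2D (n₁ n₂ r₁ r₂ d₁ d₂ : ℕ)
    (i : Fin ((n₁ - r₁) / d₁ + 1)) (j : Fin ((n₂ - r₂) / d₂ + 1)) :
    Matrix (Fin (r₁ * r₂)) (Fin (n₁ * n₂)) ℝ :=
  Matrix.of fun a b =>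
    if ∃ p : Fin r₁, ∃ q : Fin r₂, (a : ℕ) = p.1 * r₂ + q.1 ∧
        (b : ℕ) = (i.1 * d₁ + p.1) * n₂ + j.1 * d₂ + q.1 then 1 else 0

/-- The 2D patch matrix `Q = ∑_{i,p} ∑_{j,q} Q_{(i,j)} Q_{(p,q)}ᵀ`. -/
def patchMat2D (n₁ n₂ r₁ r₂ d₁ d₂ : ℕ) : Matrix (Fin (r₁ * r₂)) (Fin (r₁ * r₂)) ℝ :=
  ∑ i, ∑ p, ∑ j, ∑ q,
    patch2D n₁ n₂ r₁ r₂ d₁ d₂ i j * (patch2D n₁ n₂ r₁ r₂ d₁ d₂ p q)ᵀ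

/-- Maximum eigenvalue of a Hermitian (real symmetric) matrix. -/
def lamMax {m : ℕ} (A : Matrix (Fin m) (Fin m) ℝ) (hA : A.IsHermitian) : ℝ :=
  ⨆ i, hA.eigenvalues i

/-- Minimum eigenvalue of a Hermitian (real symmetric) matrix. -/
def lamMin {m : ℕ} (A : Matrix (Fin m) (Fin m) ℝ) (hA : A.IsHermitian) : ℝ :=
  ⨅ i, hA.eigenvalues i


lemma eig_ge {m : ℕ} {A : Matrix (Fin m) (Fin m) ℝ} (hA : A.IsHermitian) {c : ℝ}
    (h : (A - c • (1 : Matrix (Fin m) (Fin m) ℝ)).PosSemidef) (i : Fin m) :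
    c ≤ hA.eigenvalues i := by
  set v : Fin m → ℝ := ⇑(hA.eigenvectorBasis i) with hv
  have hnorm : dotProduct (star v) v = 1 := by
    have h1 : ‖hA.eigenvectorBasis i‖ = 1 := hA.eigenvectorBasis.orthonormal.1 i
    have h2 : inner (𝕜 := ℝ) (hA.eigenvectorBasis i) (hA.eigenvectorBasis i) = (1:ℝ) := by
      rw [real_inner_self_eq_norm_mul_norm, h1]; norm_num
    rw [← h2]
    simp [dotProduct, PiLp.inner_apply, hv, RCLike.inner_apply, mul_comm]
    have h3 := EuclideanSpace.inner_eq_star_dotProduct (hA.eigenvectorBasis i) (hA.eigenvectorBasis i)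
    rw [h2] at h3
    simpa [dotProduct] using h3.symm
  have hq := h.dotProduct_mulVec_nonneg v
  rw [sub_mulVec, dotProduct_sub, smul_mulVec, one_mulVec, dotProduct_smul,
    smul_eq_mul, hnorm, mul_one, sub_nonneg] at hq
  have he := hA.eigenvalues_eq i
  calc c ≤ dotProduct (star v) (A *ᵥ v) := hq
    _ = hA.eigenvalues i := by rw [he]; simp; rfl

lemma eig_le {m : ℕ} {A : Matrix (Fin m) (Fin m) ℝ} (hA : A.IsHermitian) {c : ℝ}
    (h : (c • (1 : Matrix (Fin m) (Fin m) ℝ) - A).PosSemidef) (i : Fin m) :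
    hA.eigenvalues i ≤ c := by
  set v : Fin m → ℝ := ⇑(hA.eigenvectorBasis i) with hv
  have hnorm : dotProduct (star v) v = 1 := by
    have h1 : ‖hA.eigenvectorBasis i‖ = 1 := hA.eigenvectorBasis.orthonormal.1 i
    have h2 : inner (𝕜 := ℝ) (hA.eigenvectorBasis i) (hA.eigenvectorBasis i) = (1:ℝ) := by
      rw [real_inner_self_eq_norm_mul_norm, h1]; norm_num
    rw [← h2]
    simp [dotProduct, PiLp.inner_apply, hv, RCLike.inner_apply, mul_comm]
    have h3 := EuclideanSpace.inner_eq_star_dotProduct (hA.eigenvectorBasis i) (hA.eigenvectorBasis i)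
    rw [h2] at h3
    simpa [dotProduct] using h3.symm
  have hq := h.dotProduct_mulVec_nonneg v
  rw [sub_mulVec, dotProduct_sub, smul_mulVec, one_mulVec, dotProduct_smul,
    smul_eq_mul, hnorm, mul_one, sub_nonneg] at hq
  have he := hA.eigenvalues_eq i
  calc hA.eigenvalues i = dotProduct (star v) (A *ᵥ v) := by rw [he]; simp; rfl
    _ ≤ c := hq

lemma psd_smul {m : Type*} [Fintype m] {M : Matrix m m ℝ} (hM : M.PosSemidef) {c : ℝ}
    (hc : 0 ≤ c) : (c • M).PosSemidef := by
  refine Matrix.PosSemidef.of_dotProduct_mulVec_nonneg ?_ fun x => ?_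
  · show (c • M)ᴴ = c • M
    rw [Matrix.conjTranspose_smul, star_trivial, hM.1]
  · rw [smul_mulVec, dotProduct_smul, smul_eq_mul]
    exact mul_nonneg hc (hM.dotProduct_mulVec_nonneg x)

lemma psd_kron {m n : Type*} [Fintype m] [Fintype n] [DecidableEq m] [DecidableEq n]
    {A : Matrix m m ℝ} {B : Matrix n n ℝ} (hA : A.PosSemidef) (hB : B.PosSemidef) :
    (A ⊗ₖ B).PosSemidef := by
  exact hA.kronecker hB

lemma sub_kron {m n p q : Type*} (A B : Matrix m n ℝ) (C : Matrix p q ℝ) :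
    (A - B) ⊗ₖ C = A ⊗ₖ C - B ⊗ₖ C := by
  ext ⟨x, y⟩ ⟨z, w⟩
  simp [sub_mul]

lemma kron_sub {m n p q : Type*} (A : Matrix m n ℝ) (B C : Matrix p q ℝ) :
    A ⊗ₖ (B - C) = A ⊗ₖ B - A ⊗ₖ C := by
  ext ⟨x, y⟩ ⟨z, w⟩
  simp [mul_sub]

lemma kron_lower {r₁ r₂ : ℕ} {A : Matrix (Fin r₁) (Fin r₁) ℝ} {B : Matrix (Fin r₂) (Fin r₂) ℝ}
    (hB : B.PosSemidef)
    (hA2 : (A - (1/2 : ℝ) • 1).PosSemidef) (hB2 : (B - (1/2 : ℝ) • 1).PosSemidef) :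
    ((A ⊗ₖ B) - (1/4 : ℝ) • 1).PosSemidef := by
  have key : (A ⊗ₖ B) - (1/4 : ℝ) • (1 : Matrix (Fin r₁ × Fin r₂) (Fin r₁ × Fin r₂) ℝ)
      = ((A - (1/2 : ℝ) • 1) ⊗ₖ B)
        + (1/2 : ℝ) • ((1 : Matrix (Fin r₁) (Fin r₁) ℝ) ⊗ₖ (B - (1/2 : ℝ) • 1)) := by
    rw [sub_kron, kron_sub, Matrix.smul_kronecker,
      Matrix.kronecker_smul, Matrix.one_kronecker_one, smul_sub, smul_smul]
    have h : (1/2 : ℝ) * (1/2 : ℝ) = 1/4 := by norm_num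
    rw [h]
    abel
  rw [key]
  exact (psd_kron hA2 hB).add (psd_smul (psd_kron Matrix.PosSemidef.one hB2) (by norm_num))

lemma kron_upper {r₁ r₂ : ℕ} {A : Matrix (Fin r₁) (Fin r₁) ℝ} {B : Matrix (Fin r₂) (Fin r₂) ℝ}
    {C₁ C₂ : ℝ} (hC₁ : 0 ≤ C₁)
    (hA : A.PosSemidef) (hB : B.PosSemidef)
    (hA2 : (C₁ • 1 - A).PosSemidef) (hB2 : (C₂ • 1 - B).PosSemidef) :
    ((C₁ * C₂) • (1 : Matrix (Fin r₁ × Fin r₂) (Fin r₁ × Fin r₂) ℝ) - (A ⊗ₖ B)).PosSemidef := by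
  have key : (C₁ * C₂) • (1 : Matrix (Fin r₁ × Fin r₂) (Fin r₁ × Fin r₂) ℝ) - (A ⊗ₖ B)
      = ((C₁ • 1 - A) ⊗ₖ B)
        + C₁ • ((1 : Matrix (Fin r₁) (Fin r₁) ℝ) ⊗ₖ (C₂ • 1 - B)) := by
    rw [sub_kron, kron_sub, Matrix.smul_kronecker,
      Matrix.kronecker_smul, Matrix.one_kronecker_one, smul_sub, smul_smul]
    abel
  rw [key]
  exact (psd_kron hA2 hB).add (psd_smul (psd_kron Matrix.PosSemidef.one hB2) hC₁)


lemma decomp_unique {n p q p' q' : ℕ} (hq : q < n) (hq' : q' < n)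
    (h : p * n + q = p' * n + q') : p = p' ∧ q = q' := by
  have hn : 0 < n := Nat.pos_of_ne_zero (by rintro rfl; exact Nat.not_lt_zero _ hq)
  have h1 : ∀ a b : ℕ, b < n → (a * n + b) / n = a := fun a b hb => by
    rw [add_comm, Nat.add_mul_div_right _ _ hn, Nat.div_eq_of_lt hb, zero_add]
  have h2 : ∀ a b : ℕ, b < n → (a * n + b) % n = b := fun a b hb => by
    rw [add_comm, Nat.add_mul_mod_self_right, Nat.mod_eq_of_lt hb]
  constructor
  · rw [← h1 p q hq, ← h1 p' q' hq', h]
  · rw [← h2 p q hq, ← h2 p' q' hq', h]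

/-- division-based equivalence `Fin (m*n) ≃ Fin m × Fin n`. -/
def divModEquiv (m n : ℕ) (hn : 0 < n) : Fin (m * n) ≃ Fin m × Fin n where
  toFun b := (⟨b.1 / n, by
      exact Nat.div_lt_of_lt_mul (mul_comm m n ▸ b.2)⟩,
    ⟨b.1 % n, Nat.mod_lt _ hn⟩)
  invFun x := ⟨x.1.1 * n + x.2.1, by
      have h1 : x.1.1 * n + x.2.1 < (x.1.1 + 1) * n := by
        rw [add_mul, one_mul]; exact Nat.add_lt_add_left x.2.2 _
      exact lt_of_lt_of_le h1 (Nat.mul_le_mul_right _ x.1.2)⟩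
  left_inv b := by
    ext
    simp only []
    rw [add_comm, Nat.mod_add_div']
  right_inv x := by
    have h1 : (x.1.1 * n + x.2.1) / n = x.1.1 := by
      rw [add_comm, Nat.add_mul_div_right _ _ hn, Nat.div_eq_of_lt x.2.2, zero_add]
    have h2 : (x.1.1 * n + x.2.1) % n = x.2.1 := by
      rw [add_comm, Nat.add_mul_mod_self_right, Nat.mod_eq_of_lt x.2.2]
    ext <;> simp [h1, h2]

lemma ite_zero_mul_ite_zero' {P Q : Prop} [Decidable P] [Decidable Q] (a b : ℝ) :
    (if P then a else 0) * (if Q then b else 0) = if P ∧ Q then a * b else 0 := by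
  by_cases hP : P <;> by_cases hQ : Q <;> simp [hP, hQ]

lemma patch2D_eq (n₁ n₂ r₁ r₂ d₁ d₂ : ℕ) (hr₂ : 0 < r₂) (hrn₂ : r₂ ≤ n₂) (hd₂ : 0 < d₂)
    (i : Fin ((n₁ - r₁) / d₁ + 1)) (j : Fin ((n₂ - r₂) / d₂ + 1)) :
    patch2D n₁ n₂ r₁ r₂ d₁ d₂ i j =
      ((patch1D n₁ r₁ d₁ i) ⊗ₖ (patch1D n₂ r₂ d₂ j)).submatrix
        (divModEquiv r₁ r₂ hr₂) (divModEquiv n₁ n₂ (lt_of_lt_of_le hr₂ hrn₂)) := by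
  have hn₂ : 0 < n₂ := lt_of_lt_of_le hr₂ hrn₂
  ext a b
  simp only [patch2D, patch1D, Matrix.submatrix_apply, Matrix.kroneckerMap_apply,
    Matrix.of_apply, divModEquiv, Equiv.coe_fn_mk, ite_zero_mul_ite_zero', mul_one]
  have ha : (a : ℕ) = (a : ℕ) / r₂ * r₂ + (a : ℕ) % r₂ := (Nat.div_add_mod' _ _).symm
  have hb : (b : ℕ) = (b : ℕ) / n₂ * n₂ + (b : ℕ) % n₂ := (Nat.div_add_mod' _ _).symm
  have hjd : j.1 * d₂ ≤ n₂ - r₂ := by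
    have := Nat.lt_succ_iff.mp j.2
    exact (Nat.le_div_iff_mul_le hd₂).mp this
  refine if_congr ⟨?_, ?_⟩ rfl rfl
  · rintro ⟨p, q, h1, h2⟩
    have hpq := decomp_unique q.2 (Nat.mod_lt _ hr₂) (by rw [← h1]; exact ha)
    have hb2 : (b : ℕ) = (i.1 * d₁ + p.1) * n₂ + (j.1 * d₂ + q.1) := by
      rw [h2]; ring
    have hq2 : j.1 * d₂ + q.1 < n₂ := by
      have := q.2; omega
    have hst := decomp_unique hq2 (Nat.mod_lt _ hn₂) (by rw [← hb2]; exact hb)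
    refine ⟨?_, ?_⟩
    · rw [← hst.1, hpq.1]
    · rw [← hst.2, hpq.2]
  · rintro ⟨hs, ht⟩
    refine ⟨⟨(a : ℕ) / r₂, Nat.div_lt_of_lt_mul (mul_comm r₁ r₂ ▸ a.2)⟩,
      ⟨(a : ℕ) % r₂, Nat.mod_lt _ hr₂⟩, ha, ?_⟩
    calc (b : ℕ) = (b : ℕ) / n₂ * n₂ + (b : ℕ) % n₂ := hb
      _ = (i.1 * d₁ + (a:ℕ) / r₂) * n₂ + (j.1 * d₂ + (a:ℕ) % r₂) := by rw [hs, ht]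
      _ = (i.1 * d₁ + (a:ℕ) / r₂) * n₂ + j.1 * d₂ + (a:ℕ) % r₂ := by ring

lemma sum_kron {ι κ m₁ m₂ n₁ n₂ : Type*} [Fintype ι] [Fintype κ]
    (X : ι → Matrix m₁ n₁ ℝ) (Y : κ → Matrix m₂ n₂ ℝ) :
    (∑ i, X i) ⊗ₖ (∑ j, Y j) = ∑ i, ∑ j, (X i ⊗ₖ Y j) := by
  ext ⟨x, y⟩ ⟨z, w⟩
  simp [Matrix.sum_apply, Finset.sum_mul_sum]

lemma quad_sum_kron {ι₁ ι₂ κ₁ κ₂ m₁ m₂ n₁ n₂ : Type*} [Fintype ι₁] [Fintype ι₂]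
    [Fintype κ₁] [Fintype κ₂]
    (X : ι₁ → ι₂ → Matrix m₁ n₁ ℝ) (Y : κ₁ → κ₂ → Matrix m₂ n₂ ℝ) :
    (∑ i, ∑ p, X i p) ⊗ₖ (∑ j, ∑ q, Y j q) =
      ∑ i, ∑ p, ∑ j, ∑ q, (X i p ⊗ₖ Y j q) := by
  calc (∑ i, ∑ p, X i p) ⊗ₖ (∑ j, ∑ q, Y j q)
      = ∑ i, ∑ j, (∑ p, X i p) ⊗ₖ (∑ q, Y j q) := sum_kron _ _
    _ = ∑ i, ∑ j, ∑ p, ∑ q, (X i p ⊗ₖ Y j q) :=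
        Finset.sum_congr rfl fun i _ => Finset.sum_congr rfl fun j _ => sum_kron _ _
    _ = ∑ i, ∑ p, ∑ j, ∑ q, (X i p ⊗ₖ Y j q) :=
        Finset.sum_congr rfl fun i _ => Finset.sum_comm

lemma quad_sum_submatrix {ι₁ ι₂ κ₁ κ₂ m n m' n' : Type*} [Fintype ι₁] [Fintype ι₂]
    [Fintype κ₁] [Fintype κ₂]
    (X : ι₁ → ι₂ → κ₁ → κ₂ → Matrix m n ℝ) (f : m' → m) (g : n' → n) :
    (∑ i, ∑ p, ∑ j, ∑ q, X i p j q).submatrix f g =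
      ∑ i, ∑ p, ∑ j, ∑ q, (X i p j q).submatrix f g := by
  ext x y
  simp [Matrix.sum_apply]

lemma patchMat2D_eq (n₁ n₂ r₁ r₂ d₁ d₂ : ℕ) (hr₂ : 0 < r₂) (hrn₂ : r₂ ≤ n₂) (hd₂ : 0 < d₂) :
    patchMat2D n₁ n₂ r₁ r₂ d₁ d₂ =
      ((patchMat1D n₁ r₁ d₁) ⊗ₖ (patchMat1D n₂ r₂ d₂)).submatrix
        (⇑(divModEquiv r₁ r₂ hr₂)) (⇑(divModEquiv r₁ r₂ hr₂)) := by
  rw [patchMat1D, patchMat1D, quad_sum_kron, quad_sum_submatrix, patchMat2D]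
  refine Finset.sum_congr rfl fun i _ => Finset.sum_congr rfl fun p _ =>
    Finset.sum_congr rfl fun j _ => Finset.sum_congr rfl fun q _ => ?_
  rw [patch2D_eq n₁ n₂ r₁ r₂ d₁ d₂ hr₂ hrn₂ hd₂ i j,
    patch2D_eq n₁ n₂ r₁ r₂ d₁ d₂ hr₂ hrn₂ hd₂ p q,
    Matrix.transpose_submatrix,
    Matrix.submatrix_mul_equiv _ _ _ (divModEquiv n₁ n₂ (lt_of_lt_of_le hr₂ hrn₂)) _,
    ← Matrix.kroneckerMap_transpose, ← Matrix.mul_kronecker_mul]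

/-- the summed selection matrix -/
def pS (n r d : ℕ) : Matrix (Fin r) (Fin n) ℝ := ∑ i, patch1D n r d i

/-- the vector `Sᵀ y` expressed with indicators -/
def pF (n r d : ℕ) (y : Fin r → ℝ) (b : Fin n) : ℝ :=
  ∑ a, if ∃ i : Fin ((n - r) / d + 1), (b : ℕ) = i.1 * d + a.1 then y a else 0

lemma patchMat1D_factor (n r d : ℕ) :
    patchMat1D n r d = pS n r d * (pS n r d)ᵀ := by
  rw [patchMat1D, pS, Matrix.transpose_sum, Matrix.sum_mul]
  exact Finset.sum_congr rfl fun i _ => (Matrix.mul_sum _ _ _).symm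

lemma indicator_sum (n r d : ℕ) (hd : 0 < d) (a : Fin r) (b : Fin n) :
    (∑ i : Fin ((n - r) / d + 1), if (b : ℕ) = i.1 * d + a.1 then (1 : ℝ) else 0)
      = if ∃ i : Fin ((n - r) / d + 1), (b : ℕ) = i.1 * d + a.1 then 1 else 0 := by
  by_cases h : ∃ i : Fin ((n - r) / d + 1), (b : ℕ) = i.1 * d + a.1
  · obtain ⟨i, hi⟩ := h
    rw [if_pos ⟨i, hi⟩, Finset.sum_eq_single i]
    · rw [if_pos hi]
    · intro j _ hj
      rw [if_neg]
      intro hj'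
      apply hj
      have : j.1 * d = i.1 * d := by omega
      exact Fin.ext (Nat.eq_of_mul_eq_mul_right hd this)
    · intro hmem; exact absurd (Finset.mem_univ i) hmem
  · rw [if_neg h]
    exact Finset.sum_eq_zero fun i _ => if_neg fun hi => h ⟨i, hi⟩

lemma quad_eq (n r d : ℕ) (hd : 0 < d) (y : Fin r → ℝ) :
    y ⬝ᵥ (patchMat1D n r d *ᵥ y) = ∑ b, (pF n r d y b) ^ 2 := by
  have hST : (pS n r d)ᵀ *ᵥ y = pF n r d y := by
    funext b
    rw [pF, Matrix.mulVec, dotProduct]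
    refine Finset.sum_congr rfl fun a _ => ?_
    rw [Matrix.transpose_apply, pS, Matrix.sum_apply]
    have hp : ∀ i : Fin ((n - r) / d + 1), patch1D n r d i a b
        = if (b : ℕ) = i.1 * d + a.1 then (1:ℝ) else 0 := fun i => rfl
    simp_rw [hp]
    rw [indicator_sum n r d hd a b]
    by_cases h : ∃ i : Fin ((n - r) / d + 1), (b : ℕ) = i.1 * d + a.1
    · rw [if_pos h, if_pos h, one_mul]
    · rw [if_neg h, if_neg h, zero_mul]
  rw [patchMat1D_factor, ← Matrix.mulVec_mulVec, Matrix.dotProduct_mulVec,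
    ← Matrix.mulVec_transpose, hST, dotProduct]
  exact Finset.sum_congr rfl fun b _ => (sq (pF n r d y b)).symm

/-- prefix sums within a residue class -/
def pA (r d : ℕ) (y : Fin r → ℝ) (a : Fin r) : ℝ :=
  ∑ a' : Fin r, if (a' : ℕ) ≤ (a : ℕ) ∧ (a' : ℕ) % d = (a : ℕ) % d then y a' else 0

/-- suffix sums within a residue class -/
def pB (r d : ℕ) (y : Fin r → ℝ) (a : Fin r) : ℝ :=
  ∑ a' : Fin r, if (a : ℕ) ≤ (a' : ℕ) ∧ (a' : ℕ) % d = (a : ℕ) % d then y a' else 0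

/-- strict prefix sums -/
def pA' (r d : ℕ) (y : Fin r → ℝ) (a : Fin r) : ℝ :=
  ∑ a' : Fin r, if (a' : ℕ) + d ≤ (a : ℕ) ∧ (a' : ℕ) % d = (a : ℕ) % d then y a' else 0

/-- strict suffix sums -/
def pB' (r d : ℕ) (y : Fin r → ℝ) (a : Fin r) : ℝ :=
  ∑ a' : Fin r, if (a : ℕ) + d ≤ (a' : ℕ) ∧ (a' : ℕ) % d = (a : ℕ) % d then y a' else 0

section OneD

variable {n r d : ℕ}

lemma cond_prefix (hd : 0 < d) (hrn : r ≤ n) (hn : 2 * r - 1 ≤ n) (a a' : Fin r) :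
    ((a' : ℕ) ≤ (a : ℕ) ∧ (a' : ℕ) % d = (a : ℕ) % d)
      ↔ ∃ i : Fin ((n - r) / d + 1), (a : ℕ) = i.1 * d + a'.1 := by
  constructor
  · rintro ⟨hle, hmod⟩
    have hdvd : d ∣ (a : ℕ) - (a' : ℕ) := (Nat.modEq_iff_dvd' hle).mp hmod
    obtain ⟨t, ht⟩ := hdvd
    have heq : (a : ℕ) = d * t + a'.1 := by omega
    have htd : t * d ≤ r - 1 := by
      have := a.2; have := a'.2
      rw [mul_comm]; omega
    have ht1 : t ≤ (r - 1) / d := (Nat.le_div_iff_mul_le hd).mpr htd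
    have ht2 : (r - 1) / d ≤ (n - r) / d := Nat.div_le_div_right (by omega)
    exact ⟨⟨t, by omega⟩, by rw [heq, mul_comm]⟩
  · rintro ⟨i, hi⟩
    constructor
    · omega
    · rw [hi, mul_comm i.1 d, Nat.mul_add_mod]

lemma cond_suffix (hd : 0 < d) (hrn : r ≤ n) (hn : 2 * r - 1 ≤ n) (a a' : Fin r) :
    ((a : ℕ) ≤ (a' : ℕ) ∧ (a' : ℕ) % d = (a : ℕ) % d)
      ↔ ∃ i : Fin ((n - r) / d + 1), (a : ℕ) + (n - r) / d * d = i.1 * d + a'.1 := by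
  constructor
  · rintro ⟨hle, hmod⟩
    have hdvd : d ∣ (a' : ℕ) - (a : ℕ) := (Nat.modEq_iff_dvd' hle).mp hmod.symm
    obtain ⟨t, ht⟩ := hdvd
    have htd : t * d ≤ r - 1 := by
      have := a.2; have := a'.2
      rw [mul_comm]; omega
    have ht1 : t ≤ (r - 1) / d := (Nat.le_div_iff_mul_le hd).mpr htd
    have ht2 : (r - 1) / d ≤ (n - r) / d := Nat.div_le_div_right (by omega)
    have htK : t ≤ (n - r) / d := le_trans ht1 ht2
    refine ⟨⟨(n - r) / d - t, by omega⟩, ?_⟩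
    have hsub : ((n - r) / d - t) * d = (n - r) / d * d - t * d := Nat.sub_mul _ _ _
    have hle2 : t * d ≤ (n - r) / d * d := Nat.mul_le_mul_right d htK
    have ht' : d * t = t * d := mul_comm _ _
    simp only []
    omega
  · rintro ⟨i, hi⟩
    have hi2 : i.1 ≤ (n - r) / d := by omega
    have hmul : i.1 * d ≤ (n - r) / d * d := Nat.mul_le_mul_right d hi2
    have hu : ((n - r) / d - i.1) * d = (n - r) / d * d - i.1 * d := Nat.sub_mul _ _ _
    have ha' : (a' : ℕ) = (a : ℕ) + ((n - r) / d - i.1) * d := by omega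
    refine ⟨by omega, ?_⟩
    rw [ha', Nat.add_mul_mod_self_right]

variable {y : Fin r → ℝ}

lemma pA_split (hd : 0 < d) (a : Fin r) : pA r d y a = pA' r d y a + y a := by
  rw [pA, pA']
  have key : ∀ a' : Fin r,
      (if (a' : ℕ) ≤ (a : ℕ) ∧ (a' : ℕ) % d = (a : ℕ) % d then y a' else 0)
      = (if (a' : ℕ) + d ≤ (a : ℕ) ∧ (a' : ℕ) % d = (a : ℕ) % d then y a' else 0)
        + (if a' = a then y a' else 0) := by
    intro a'
    by_cases hres : (a' : ℕ) % d = (a : ℕ) % d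
    · by_cases heq : a' = a
      · subst heq
        rw [if_pos ⟨le_refl _, hres⟩, if_neg (by omega), if_pos rfl, zero_add]
      · rw [if_neg heq, add_zero]
        by_cases hle : (a' : ℕ) ≤ (a : ℕ)
        · have hlt : (a' : ℕ) < (a : ℕ) := by
            rcases Nat.lt_or_ge (a' : ℕ) (a : ℕ) with h | h
            · exact h
            · exact absurd (Fin.ext (le_antisymm hle h)) heq
          have hdvd : d ∣ (a : ℕ) - (a' : ℕ) := (Nat.modEq_iff_dvd' hle).mp hres
          have hge : d ≤ (a : ℕ) - (a' : ℕ) := Nat.le_of_dvd (by omega) hdvd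
          rw [if_pos ⟨by omega, hres⟩, if_pos ⟨by omega, hres⟩]
        · rw [if_neg (fun h => hle h.1), if_neg (fun h => hle (by omega))]
    · rw [if_neg (fun h => hres h.2), if_neg (fun h => hres h.2),
        if_neg (fun h => hres (by rw [h])), add_zero]
  rw [Finset.sum_congr rfl fun a' _ => key a', Finset.sum_add_distrib,
    Finset.sum_ite_eq' Finset.univ a y, if_pos (Finset.mem_univ a)]

lemma pB_split (hd : 0 < d) (a : Fin r) : pB r d y a = pB' r d y a + y a := by
  rw [pB, pB']
  have key : ∀ a' : Fin r,
      (if (a : ℕ) ≤ (a' : ℕ) ∧ (a' : ℕ) % d = (a : ℕ) % d then y a' else 0)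
      = (if (a : ℕ) + d ≤ (a' : ℕ) ∧ (a' : ℕ) % d = (a : ℕ) % d then y a' else 0)
        + (if a' = a then y a' else 0) := by
    intro a'
    by_cases hres : (a' : ℕ) % d = (a : ℕ) % d
    · by_cases heq : a' = a
      · subst heq
        rw [if_pos ⟨le_refl _, hres⟩, if_neg (by omega), if_pos rfl, zero_add]
      · rw [if_neg heq, add_zero]
        by_cases hle : (a : ℕ) ≤ (a' : ℕ)
        · have hlt : (a : ℕ) < (a' : ℕ) := by
            rcases Nat.lt_or_ge (a : ℕ) (a' : ℕ) with h | h
            · exact h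
            · exact absurd (Fin.ext (le_antisymm h hle)) heq
          have hdvd : d ∣ (a' : ℕ) - (a : ℕ) := (Nat.modEq_iff_dvd' hle).mp hres.symm
          have hge : d ≤ (a' : ℕ) - (a : ℕ) := Nat.le_of_dvd (by omega) hdvd
          rw [if_pos ⟨by omega, hres⟩, if_pos ⟨by omega, hres⟩]
        · rw [if_neg (fun h => hle h.1), if_neg (fun h => hle (by omega))]
    · rw [if_neg (fun h => hres h.2), if_neg (fun h => hres h.2),
        if_neg (fun h => hres (by rw [h])), add_zero]
  rw [Finset.sum_congr rfl fun a' _ => key a', Finset.sum_add_distrib,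
    Finset.sum_ite_eq' Finset.univ a y, if_pos (Finset.mem_univ a)]

lemma pA'_eq (hd : 0 < d) :
    ∑ a, (pA' r d y a) ^ 2
      = ∑ a ∈ Finset.univ.filter (fun a : Fin r => (a : ℕ) + d < r), (pA r d y a) ^ 2 := by
  rw [← Finset.sum_filter_add_sum_filter_not Finset.univ (fun a : Fin r => d ≤ (a : ℕ))
    (fun a => (pA' r d y a) ^ 2)]
  have h0 : ∑ a ∈ Finset.univ.filter (fun a : Fin r => ¬ d ≤ (a : ℕ)), (pA' r d y a) ^ 2
      = 0 := by
    refine Finset.sum_eq_zero fun a ha => ?_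
    rw [Finset.mem_filter] at ha
    have : pA' r d y a = 0 := Finset.sum_eq_zero fun a' _ => if_neg (by omega)
    rw [this]; ring
  rw [h0, add_zero]
  refine Finset.sum_nbij' (i := fun a : Fin r => (⟨(a : ℕ) - d, by omega⟩ : Fin r))
    (j := fun a : Fin r => if h : (a : ℕ) + d < r then (⟨(a : ℕ) + d, h⟩ : Fin r) else a)
    ?_ ?_ ?_ ?_ ?_
  · intro a ha
    rw [Finset.mem_filter] at ha
    rw [Finset.mem_filter]
    refine ⟨Finset.mem_univ _, ?_⟩
    have := a.2; simp only []; omega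
  · intro a ha
    rw [Finset.mem_filter] at ha
    rw [dif_pos ha.2, Finset.mem_filter]
    exact ⟨Finset.mem_univ _, by simp only []; omega⟩
  · intro a ha
    rw [Finset.mem_filter] at ha
    dsimp only
    have h2 : ((⟨(a : ℕ) - d, by omega⟩ : Fin r) : ℕ) + d < r := by
      have := a.2; simp only []; omega
    rw [dif_pos h2]
    exact Fin.ext (by simp only []; omega)
  · intro a ha
    rw [Finset.mem_filter] at ha
    rw [dif_pos ha.2]
    exact Fin.ext (by simp only []; omega)
  · intro a ha
    rw [Finset.mem_filter] at ha
    obtain ⟨-, hda⟩ := ha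
    have hmod : ((a : ℕ) - d) % d = (a : ℕ) % d := by
      conv_rhs => rw [← Nat.sub_add_cancel hda]
      rw [Nat.add_mod_right]
    have harg : pA' r d y a = pA r d y ⟨(a : ℕ) - d, by omega⟩ := by
      rw [pA', pA]
      refine Finset.sum_congr rfl fun a' _ => ?_
      refine if_congr ?_ rfl rfl
      simp only []
      rw [hmod]
      constructor
      · rintro ⟨h1, h2⟩; exact ⟨by omega, h2⟩
      · rintro ⟨h1, h2⟩; exact ⟨by omega, h2⟩
    rw [harg]

lemma pB'_eq (hd : 0 < d) :
    ∑ a, (pB' r d y a) ^ 2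
      = ∑ a ∈ Finset.univ.filter (fun a : Fin r => d ≤ (a : ℕ)), (pB r d y a) ^ 2 := by
  rw [← Finset.sum_filter_add_sum_filter_not Finset.univ (fun a : Fin r => (a : ℕ) + d < r)
    (fun a => (pB' r d y a) ^ 2)]
  have h0 : ∑ a ∈ Finset.univ.filter (fun a : Fin r => ¬ (a : ℕ) + d < r), (pB' r d y a) ^ 2
      = 0 := by
    refine Finset.sum_eq_zero fun a ha => ?_
    rw [Finset.mem_filter] at ha
    have : pB' r d y a = 0 :=
      Finset.sum_eq_zero fun a' _ => if_neg (by have := a'.2; omega)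
    rw [this]; ring
  rw [h0, add_zero]
  refine Finset.sum_nbij'
    (i := fun a : Fin r => if h : (a : ℕ) + d < r then (⟨(a : ℕ) + d, h⟩ : Fin r) else a)
    (j := fun a : Fin r => (⟨(a : ℕ) - d, by omega⟩ : Fin r))
    ?_ ?_ ?_ ?_ ?_
  · intro a ha
    rw [Finset.mem_filter] at ha
    rw [dif_pos ha.2, Finset.mem_filter]
    exact ⟨Finset.mem_univ _, by simp only []; omega⟩
  · intro a ha
    rw [Finset.mem_filter] at ha
    rw [Finset.mem_filter]
    refine ⟨Finset.mem_univ _, ?_⟩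
    have := a.2; simp only []; omega
  · intro a ha
    rw [Finset.mem_filter] at ha
    rw [dif_pos ha.2]
    exact Fin.ext (by simp only []; omega)
  · intro a ha
    rw [Finset.mem_filter] at ha
    dsimp only
    have h2 : ((⟨(a : ℕ) - d, by omega⟩ : Fin r) : ℕ) + d < r := by
      have := a.2; simp only []; omega
    rw [dif_pos h2]
    exact Fin.ext (by simp only []; omega)
  · intro a ha
    rw [Finset.mem_filter] at ha
    obtain ⟨-, hda⟩ := ha
    rw [dif_pos hda]
    have harg : pB' r d y a = pB r d y ⟨(a : ℕ) + d, hda⟩ := by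
      rw [pB', pB]
      refine Finset.sum_congr rfl fun a' _ => ?_
      refine if_congr ?_ rfl rfl
      simp only []
      rw [Nat.add_mod_right]
    rw [harg]

lemma minmax_eq (hd : 0 < d) (hdr : d ≤ r) :
    ∑ a ∈ Finset.univ.filter (fun a : Fin r => ¬ (a : ℕ) + d < r), (pA r d y a) ^ 2
      = ∑ a ∈ Finset.univ.filter (fun a : Fin r => ¬ d ≤ (a : ℕ)), (pB r d y a) ^ 2 := by
  refine Finset.sum_nbij'
    (i := fun a : Fin r => (⟨(a : ℕ) % d, lt_of_lt_of_le (Nat.mod_lt _ hd) hdr⟩ : Fin r))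
    (j := fun a : Fin r => (⟨(a : ℕ) + d * ((r - 1 - (a : ℕ)) / d), by
      have h1 : d * ((r - 1 - (a : ℕ)) / d) ≤ r - 1 - (a : ℕ) := Nat.mul_div_le _ _
      have := a.2; omega⟩ : Fin r))
    ?_ ?_ ?_ ?_ ?_
  · intro a ha
    rw [Finset.mem_filter]
    exact ⟨Finset.mem_univ _, by have := Nat.mod_lt (a : ℕ) hd; simp only []; omega⟩
  · intro a ha
    rw [Finset.mem_filter] at ha
    rw [Finset.mem_filter]
    refine ⟨Finset.mem_univ _, ?_⟩
    simp only []
    have h1 := Nat.div_add_mod (r - 1 - (a : ℕ)) d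
    have h2 := Nat.mod_lt (r - 1 - (a : ℕ)) hd
    have := a.2
    omega
  · -- j (i a) = a  on max set
    intro a ha
    rw [Finset.mem_filter] at ha
    obtain ⟨-, hmax⟩ := ha
    dsimp only
    have hc := Nat.div_add_mod (a : ℕ) d
    have hcd := Nat.mod_lt (a : ℕ) hd
    have hkey : (r - 1 - ((a : ℕ) % d)) / d = (a : ℕ) / d := by
      have ha2 := a.2
      have le1 : (a : ℕ) / d ≤ (r - 1 - ((a : ℕ) % d)) / d := by
        have h3 : d * ((a : ℕ) / d) ≤ r - 1 - ((a : ℕ) % d) := by omega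
        have h4 : d * ((a : ℕ) / d) / d = (a : ℕ) / d := Nat.mul_div_cancel_left _ hd
        calc (a : ℕ) / d = d * ((a : ℕ) / d) / d := h4.symm
          _ ≤ (r - 1 - ((a : ℕ) % d)) / d := Nat.div_le_div_right h3
      have le2 : (r - 1 - ((a : ℕ) % d)) / d < (a : ℕ) / d + 1 := by
        rw [Nat.div_lt_iff_lt_mul hd, add_mul, one_mul]
        have h5 : (a : ℕ) / d * d = d * ((a : ℕ) / d) := mul_comm _ _
        omega
      omega
    refine Fin.ext ?_
    simp only [hkey]
    omega
  · -- i (j a) = a  on min set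
    intro a ha
    rw [Finset.mem_filter] at ha
    obtain ⟨-, hmin⟩ := ha
    dsimp only
    have hlt : (a : ℕ) < d := by omega
    refine Fin.ext ?_
    simp only [Nat.add_mul_mod_self_left]
    exact Nat.mod_eq_of_lt hlt
  · -- value equality
    intro a ha
    rw [Finset.mem_filter] at ha
    obtain ⟨-, hmax⟩ := ha
    have harg : pA r d y a = pB r d y ⟨(a : ℕ) % d, lt_of_lt_of_le (Nat.mod_lt _ hd) hdr⟩ := by
      rw [pA, pB]
      refine Finset.sum_congr rfl fun a' _ => ?_
      refine if_congr ?_ rfl rfl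
      simp only [Nat.mod_mod_of_dvd _ dvd_rfl]
      constructor
      · rintro ⟨h1, h2⟩
        refine ⟨?_, h2⟩
        calc (a : ℕ) % d = (a' : ℕ) % d := h2.symm
          _ ≤ (a' : ℕ) := Nat.mod_le _ _
      · rintro ⟨h1, h2⟩
        refine ⟨?_, h2⟩
        by_contra hgt
        push_neg at hgt
        have hle : (a : ℕ) ≤ (a' : ℕ) := le_of_lt hgt
        have hdvd : d ∣ (a' : ℕ) - (a : ℕ) := (Nat.modEq_iff_dvd' hle).mp h2.symm
        have hge : d ≤ (a' : ℕ) - (a : ℕ) := Nat.le_of_dvd (by omega) hdvd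
        have := a'.2
        omega
    rw [harg]

lemma ptwise (hd : 0 < d) (a : Fin r) :
    (y a) ^ 2 ≤ (pA r d y a) ^ 2 + (pA' r d y a) ^ 2 + (pB r d y a) ^ 2 + (pB' r d y a) ^ 2 := by
  rw [pA_split hd a, pB_split hd a]
  nlinarith [sq_nonneg (2 * pA' r d y a + y a), sq_nonneg (2 * pB' r d y a + y a)]

lemma pF_at_prefix (hd : 0 < d) (hrn : r ≤ n) (hn : 2 * r - 1 ≤ n) (y : Fin r → ℝ) (a : Fin r) :
    pF n r d y ⟨(a : ℕ), lt_of_lt_of_le a.2 hrn⟩ = pA r d y a := by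
  rw [pF, pA]
  refine Finset.sum_congr rfl fun a' _ => ?_
  exact if_congr (Iff.symm (cond_prefix hd hrn hn a a')) rfl rfl

lemma pF_at_suffix (hd : 0 < d) (hrn : r ≤ n) (hn : 2 * r - 1 ≤ n) (y : Fin r → ℝ) (a : Fin r) :
    pF n r d y ⟨(a : ℕ) + (n - r) / d * d, by
      have h1 : (n - r) / d * d ≤ n - r := Nat.div_mul_le_self _ _
      have := a.2; omega⟩ = pB r d y a := by
  rw [pF, pB]
  refine Finset.sum_congr rfl fun a' _ => ?_
  exact if_congr (Iff.symm (cond_suffix hd hrn hn a a')) rfl rfl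

lemma lower1D (hd : 0 < d) (hdr : d ≤ r) (hrn : r ≤ n) (hn : 2 * r - 1 ≤ n) (y : Fin r → ℝ) :
    ∑ a, (y a) ^ 2 ≤ 2 * ∑ b, (pF n r d y b) ^ 2 := by
  have h1 : ∑ a, (y a) ^ 2
      ≤ ∑ a, ((pA r d y a) ^ 2 + (pA' r d y a) ^ 2 + (pB r d y a) ^ 2 + (pB' r d y a) ^ 2) :=
    Finset.sum_le_sum fun a _ => ptwise hd a
  rw [Finset.sum_add_distrib, Finset.sum_add_distrib, Finset.sum_add_distrib,
    pA'_eq hd, pB'_eq hd] at h1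
  have hsplitA := Finset.sum_filter_add_sum_filter_not Finset.univ
    (fun a : Fin r => (a : ℕ) + d < r) (fun a => (pA r d y a) ^ 2)
  have hsplitB := Finset.sum_filter_add_sum_filter_not Finset.univ
    (fun a : Fin r => d ≤ (a : ℕ)) (fun a => (pB r d y a) ^ 2)
  have hminmax := minmax_eq (y := y) hd hdr
  -- the injections into Fin n
  set e₁ : Fin r → Fin n := fun a => ⟨(a : ℕ), lt_of_lt_of_le a.2 hrn⟩ with he₁
  set e₂ : Fin r → Fin n := fun a => ⟨(a : ℕ) + (n - r) / d * d, by
    have hb : (n - r) / d * d ≤ n - r := Nat.div_mul_le_self _ _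
    have := a.2; omega⟩ with he₂
  have hAF : ∑ a, (pA r d y a) ^ 2 = ∑ b ∈ Finset.univ.image e₁, (pF n r d y b) ^ 2 := by
    rw [Finset.sum_image (fun a _ a' _ h => Fin.ext (by
      have := congrArg Fin.val h
      simpa [he₁] using this))]
    exact (Finset.sum_congr rfl fun a _ => by rw [pF_at_prefix hd hrn hn y a]).symm
  have hBF : ∑ a ∈ Finset.univ.filter (fun a : Fin r => d ≤ (a : ℕ)), (pB r d y a) ^ 2
      = ∑ b ∈ (Finset.univ.filter (fun a : Fin r => d ≤ (a : ℕ))).image e₂,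
          (pF n r d y b) ^ 2 := by
    rw [Finset.sum_image (fun a _ a' _ h => Fin.ext (by
      have := congrArg Fin.val h
      simpa [he₂] using this))]
    exact (Finset.sum_congr rfl fun a _ => by rw [pF_at_suffix hd hrn hn y a]).symm
  have hdisj : Disjoint (Finset.univ.image e₁)
      ((Finset.univ.filter (fun a : Fin r => d ≤ (a : ℕ))).image e₂) := by
    rw [Finset.disjoint_left]
    rintro b hb1 hb2
    rw [Finset.mem_image] at hb1 hb2
    obtain ⟨a1, -, rfl⟩ := hb1
    obtain ⟨a2, ha2, he⟩ := hb2
    rw [Finset.mem_filter] at ha2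
    have hv := congrArg Fin.val he
    simp only [he₁, he₂] at hv
    -- r ≤ d + (n-r)/d * d
    have h6 := Nat.div_add_mod (r - 1) d
    have h7 := Nat.mod_lt (r - 1) hd
    have h8 : (r - 1) / d * d ≤ (n - r) / d * d :=
      Nat.mul_le_mul_right d (Nat.div_le_div_right (by omega))
    have h9 : d * ((r - 1) / d) = (r - 1) / d * d := mul_comm _ _
    have := a1.2
    omega
  have hsub : ∑ b ∈ (Finset.univ.image e₁)
        ∪ ((Finset.univ.filter (fun a : Fin r => d ≤ (a : ℕ))).image e₂),
      (pF n r d y b) ^ 2 ≤ ∑ b, (pF n r d y b) ^ 2 :=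
    Finset.sum_le_sum_of_subset_of_nonneg (Finset.subset_univ _)
      (fun b _ _ => sq_nonneg _)
  rw [Finset.sum_union hdisj] at hsub
  linarith [hsub, hsplitA, hsplitB, hminmax, h1]

lemma upper1D (hd : 0 < d) (hrn : r ≤ n) (y : Fin r → ℝ) :
    ∑ b, (pF n r d y b) ^ 2
      ≤ (((n - r) / d + 1 : ℕ) : ℝ) * (((r - 1) / d + 1 : ℕ) : ℝ) * ∑ a, (y a) ^ 2 := by
  classical
  have hstep1 : ∀ b : Fin n, (pF n r d y b) ^ 2
      ≤ (((r - 1) / d + 1 : ℕ) : ℝ) * ∑ a : Fin r,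
          (if ∃ i : Fin ((n - r) / d + 1), (b : ℕ) = i.1 * d + a.1 then (y a) ^ 2 else 0) := by
    intro b
    set t := Finset.univ.filter
      (fun a : Fin r => ∃ i : Fin ((n - r) / d + 1), (b : ℕ) = i.1 * d + a.1) with ht
    have hpf : pF n r d y b = ∑ a ∈ t, y a := by
      rw [pF, ht, Finset.sum_filter]
    have hys : ∑ a : Fin r,
        (if ∃ i : Fin ((n - r) / d + 1), (b : ℕ) = i.1 * d + a.1 then (y a) ^ 2 else 0)
        = ∑ a ∈ t, (y a) ^ 2 := by
      rw [ht, Finset.sum_filter]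
    have hcs := Finset.sum_mul_sq_le_sq_mul_sq t y (fun _ => (1 : ℝ))
    simp only [mul_one, one_pow] at hcs
    have hcard : t.card ≤ (r - 1) / d + 1 := by
      have hmem : ∀ a ∈ t, (a : ℕ) / d ∈ Finset.range ((r - 1) / d + 1) := by
        intro a ha
        rw [Finset.mem_range, Nat.lt_succ_iff]
        refine Nat.div_le_div_right ?_
        have := a.2; omega
      have hinj : Set.InjOn (fun a : Fin r => (a : ℕ) / d) t := by
        intro a1 h1 a2 h2 hdiv
        simp only [ht, Finset.coe_filter, Set.mem_setOf_eq] at h1 h2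
        obtain ⟨-, i1, hi1⟩ := h1
        obtain ⟨-, i2, hi2⟩ := h2
        have hm1 : (a1 : ℕ) % d = (b : ℕ) % d := by
          rw [hi1, mul_comm i1.1 d, Nat.mul_add_mod]
        have hm2 : (a2 : ℕ) % d = (b : ℕ) % d := by
          rw [hi2, mul_comm i2.1 d, Nat.mul_add_mod]
        have hd1 := Nat.div_add_mod (a1 : ℕ) d
        have hd2 := Nat.div_add_mod (a2 : ℕ) d
        simp only [] at hdiv
        rw [hdiv] at hd1
        exact Fin.ext (by omega)
      calc t.card ≤ (Finset.range ((r - 1) / d + 1)).card :=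
            Finset.card_le_card_of_injOn _ hmem hinj
        _ = (r - 1) / d + 1 := Finset.card_range _
    have hcval : (∑ _a ∈ t, (1 : ℝ)) = (t.card : ℝ) := by simp
    rw [hpf, hys]
    calc (∑ a ∈ t, y a) ^ 2 ≤ (∑ a ∈ t, (y a) ^ 2) * (∑ _a ∈ t, (1 : ℝ)) := hcs
      _ = (t.card : ℝ) * ∑ a ∈ t, (y a) ^ 2 := by rw [hcval]; ring
      _ ≤ (((r - 1) / d + 1 : ℕ) : ℝ) * ∑ a ∈ t, (y a) ^ 2 := by
          have hnn : 0 ≤ ∑ a ∈ t, (y a) ^ 2 :=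
            Finset.sum_nonneg fun a _ => sq_nonneg _
          have : (t.card : ℝ) ≤ (((r - 1) / d + 1 : ℕ) : ℝ) := by exact_mod_cast hcard
          nlinarith
  have hstep2 : ∀ a : Fin r,
      (∑ b : Fin n, if ∃ i : Fin ((n - r) / d + 1), (b : ℕ) = i.1 * d + a.1
          then (y a) ^ 2 else 0)
      ≤ (((n - r) / d + 1 : ℕ) : ℝ) * (y a) ^ 2 := by
    intro a
    set u := Finset.univ.filter
      (fun b : Fin n => ∃ i : Fin ((n - r) / d + 1), (b : ℕ) = i.1 * d + a.1) with hu
    have hsum : (∑ b : Fin n, if ∃ i : Fin ((n - r) / d + 1), (b : ℕ) = i.1 * d + a.1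
        then (y a) ^ 2 else 0) = (u.card : ℝ) * (y a) ^ 2 := by
      rw [hu, ← Finset.sum_filter, Finset.sum_const, nsmul_eq_mul]
    have hg : ∀ i : Fin ((n - r) / d + 1), i.1 * d + a.1 < n := by
      intro i
      have h1 : i.1 ≤ (n - r) / d := by omega
      have h2 : i.1 * d ≤ (n - r) / d * d := Nat.mul_le_mul_right d h1
      have h3 : (n - r) / d * d ≤ n - r := Nat.div_mul_le_self _ _
      have := a.2; omega
    have hcard : u.card ≤ (n - r) / d + 1 := by
      have hsubset : u ⊆ Finset.univ.image
          (fun i : Fin ((n - r) / d + 1) => (⟨i.1 * d + a.1, hg i⟩ : Fin n)) := by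
        intro b hb
        rw [hu, Finset.mem_filter] at hb
        obtain ⟨-, i, hi⟩ := hb
        rw [Finset.mem_image]
        exact ⟨i, Finset.mem_univ _, Fin.ext hi.symm⟩
      calc u.card ≤ _ := Finset.card_le_card hsubset
        _ ≤ (Finset.univ : Finset (Fin ((n - r) / d + 1))).card := Finset.card_image_le
        _ = (n - r) / d + 1 := by simp
    rw [hsum]
    have hnn : (0 : ℝ) ≤ (y a) ^ 2 := sq_nonneg _
    have hcc : (u.card : ℝ) ≤ (((n - r) / d + 1 : ℕ) : ℝ) := by exact_mod_cast hcard
    nlinarith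
  calc ∑ b, (pF n r d y b) ^ 2
      ≤ ∑ b : Fin n, ((((r - 1) / d + 1 : ℕ) : ℝ) * ∑ a : Fin r,
          (if ∃ i : Fin ((n - r) / d + 1), (b : ℕ) = i.1 * d + a.1 then (y a) ^ 2 else 0)) :=
        Finset.sum_le_sum fun b _ => hstep1 b
    _ = (((r - 1) / d + 1 : ℕ) : ℝ) * ∑ a : Fin r, ∑ b : Fin n,
          (if ∃ i : Fin ((n - r) / d + 1), (b : ℕ) = i.1 * d + a.1 then (y a) ^ 2 else 0) := by
        rw [← Finset.mul_sum]
        congr 1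
        exact Finset.sum_comm
    _ ≤ (((r - 1) / d + 1 : ℕ) : ℝ) * ∑ a : Fin r, ((((n - r) / d + 1 : ℕ) : ℝ) * (y a) ^ 2) := by
        refine mul_le_mul_of_nonneg_left ?_ (by positivity)
        exact Finset.sum_le_sum fun a _ => hstep2 a
    _ = (((n - r) / d + 1 : ℕ) : ℝ) * (((r - 1) / d + 1 : ℕ) : ℝ) * ∑ a, (y a) ^ 2 := by
        rw [← Finset.mul_sum]; ring

lemma smul_one_isHermitian {c : ℝ} :
    ((c • (1 : Matrix (Fin r) (Fin r) ℝ))).IsHermitian := by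
  show (c • (1 : Matrix (Fin r) (Fin r) ℝ))ᴴ = _
  rw [Matrix.conjTranspose_smul, star_trivial, Matrix.conjTranspose_one]

lemma patchMat1D_psd (hd : 0 < d) : (patchMat1D n r d).PosSemidef := by
  rw [patchMat1D_factor]
  have h : pS n r d * (pS n r d)ᵀ = ((pS n r d)ᵀ)ᴴ * (pS n r d)ᵀ := by
    rw [Matrix.conjTranspose_eq_transpose_of_trivial, Matrix.transpose_transpose]
  rw [h]
  exact Matrix.posSemidef_conjTranspose_mul_self _

lemma dotProduct_self_eq {x : Fin r → ℝ} : x ⬝ᵥ x = ∑ a, (x a) ^ 2 :=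
  Finset.sum_congr rfl fun a _ => (sq (x a)).symm

lemma lower_psd (hd : 0 < d) (hdr : d ≤ r) (hrn : r ≤ n) (hn : 2 * r - 1 ≤ n) :
    (patchMat1D n r d - (1 / 2 : ℝ) • 1).PosSemidef := by
  refine Matrix.PosSemidef.of_dotProduct_mulVec_nonneg ?_ ?_
  · exact ((patchMat1D_psd hd).1).sub smul_one_isHermitian
  · intro x
    rw [star_trivial, sub_mulVec, dotProduct_sub, smul_mulVec, one_mulVec,
      dotProduct_smul, smul_eq_mul, quad_eq n r d hd, dotProduct_self_eq]
    have := lower1D hd hdr hrn hn x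
    linarith

lemma upper_psd (hd : 0 < d) (hdr : d ≤ r) (hrn : r ≤ n) (hn : 2 * r - 1 ≤ n) :
    (((((n - r) / d + 1 : ℕ) : ℝ) * (((r - 1) / d + 1 : ℕ) : ℝ)) • 1
      - patchMat1D n r d).PosSemidef := by
  refine Matrix.PosSemidef.of_dotProduct_mulVec_nonneg ?_ ?_
  · exact smul_one_isHermitian.sub ((patchMat1D_psd hd).1)
  · intro x
    rw [star_trivial, sub_mulVec, dotProduct_sub, smul_mulVec, one_mulVec,
      dotProduct_smul, smul_eq_mul, quad_eq n r d hd, dotProduct_self_eq]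
    have := upper1D hd hrn x
    linarith

end OneD


/-- For the 2D patch-and-stride structure, with `p₁ = ⌊(r₁−1)/d₁⌋`
and `p₂ = ⌊(r₂−1)/d₂⌋`, the 2D patch matrix `Q` satisfies `λ_min(Q) ≥ 1/4` and
`λ_max(Q) ≤ k₁·(p₁+1)·k₂·(p₂+1)`. -/
theorem stmt17 (n₁ n₂ r₁ r₂ d₁ d₂ : ℕ)
    (hd₁ : 1 ≤ d₁) (hd₁r : d₁ ≤ r₁) (hr₁n : r₁ ≤ n₁) (hn₁ : 2 * r₁ - 1 ≤ n₁)
    (hd₂ : 1 ≤ d₂) (hd₂r : d₂ ≤ r₂) (hr₂n : r₂ ≤ n₂) (hn₂ : 2 * r₂ - 1 ≤ n₂)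
    (hQ : (patchMat2D n₁ n₂ r₁ r₂ d₁ d₂).IsHermitian) :
    1 / 4 ≤ lamMin (patchMat2D n₁ n₂ r₁ r₂ d₁ d₂) hQ ∧
    lamMax (patchMat2D n₁ n₂ r₁ r₂ d₁ d₂) hQ
      ≤ (((n₁ - r₁) / d₁ + 1 : ℕ) : ℝ) * (((r₁ - 1) / d₁ : ℕ) + 1)
          * ((((n₂ - r₂) / d₂ + 1 : ℕ) : ℝ) * (((r₂ - 1) / d₂ : ℕ) + 1)) := by
  have hd₁0 : 0 < d₁ := hd₁
  have hd₂0 : 0 < d₂ := hd₂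
  have hr₁0 : 0 < r₁ := lt_of_lt_of_le hd₁0 hd₁r
  have hr₂0 : 0 < r₂ := lt_of_lt_of_le hd₂0 hd₂r
  have hmat := patchMat2D_eq n₁ n₂ r₁ r₂ d₁ d₂ hr₂0 hr₂n hd₂0
  have hP₁ := patchMat1D_psd (n := n₁) (r := r₁) (d := d₁) hd₁0
  have hP₂ := patchMat1D_psd (n := n₂) (r := r₂) (d := d₂) hd₂0
  have hL₁ := lower_psd hd₁0 hd₁r hr₁n hn₁
  have hL₂ := lower_psd hd₂0 hd₂r hr₂n hn₂
  have hU₁ := upper_psd hd₁0 hd₁r hr₁n hn₁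
  have hU₂ := upper_psd hd₂0 hd₂r hr₂n hn₂
  set C₁ : ℝ := (((n₁ - r₁) / d₁ + 1 : ℕ) : ℝ) * (((r₁ - 1) / d₁ + 1 : ℕ) : ℝ) with hC₁
  set C₂ : ℝ := (((n₂ - r₂) / d₂ + 1 : ℕ) : ℝ) * (((r₂ - 1) / d₂ + 1 : ℕ) : ℝ) with hC₂
  have hKlow := kron_lower hP₂ hL₁ hL₂
  have hKup := kron_upper (C₁ := C₁) (C₂ := C₂) (by positivity) hP₁ hP₂ hU₁ hU₂
  set e := divModEquiv r₁ r₂ hr₂0 with he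
  have hQlow : (patchMat2D n₁ n₂ r₁ r₂ d₁ d₂
      - (1/4 : ℝ) • (1 : Matrix (Fin (r₁ * r₂)) (Fin (r₁ * r₂)) ℝ)).PosSemidef := by
    have h1 := hKlow.submatrix ⇑e
    have hsub1 : ((patchMat1D n₁ r₁ d₁ ⊗ₖ patchMat1D n₂ r₂ d₂
          - (1/4 : ℝ) • 1).submatrix ⇑e ⇑e)
        = patchMat2D n₁ n₂ r₁ r₂ d₁ d₂ - (1/4 : ℝ) • 1 := by
      have hstep : ((patchMat1D n₁ r₁ d₁ ⊗ₖ patchMat1D n₂ r₂ d₂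
            - (1/4 : ℝ) • 1).submatrix ⇑e ⇑e)
          = (patchMat1D n₁ r₁ d₁ ⊗ₖ patchMat1D n₂ r₂ d₂).submatrix ⇑e ⇑e
            - (1/4 : ℝ) • (1 : Matrix (Fin r₁ × Fin r₂) (Fin r₁ × Fin r₂) ℝ).submatrix ⇑e ⇑e :=
        rfl
      rw [hstep, Matrix.submatrix_one_equiv e, hmat]
    rw [hsub1] at h1
    exact h1
  have hQup : ((C₁ * C₂) • (1 : Matrix (Fin (r₁ * r₂)) (Fin (r₁ * r₂)) ℝ)
      - patchMat2D n₁ n₂ r₁ r₂ d₁ d₂).PosSemidef := by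
    have h1 := hKup.submatrix ⇑e
    have hsub1 : (((C₁ * C₂) • 1
          - patchMat1D n₁ r₁ d₁ ⊗ₖ patchMat1D n₂ r₂ d₂).submatrix ⇑e ⇑e)
        = (C₁ * C₂) • 1 - patchMat2D n₁ n₂ r₁ r₂ d₁ d₂ := by
      have hstep : (((C₁ * C₂) • 1
            - patchMat1D n₁ r₁ d₁ ⊗ₖ patchMat1D n₂ r₂ d₂).submatrix ⇑e ⇑e)
          = (C₁ * C₂) • (1 : Matrix (Fin r₁ × Fin r₂) (Fin r₁ × Fin r₂) ℝ).submatrix ⇑e ⇑e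
            - (patchMat1D n₁ r₁ d₁ ⊗ₖ patchMat1D n₂ r₂ d₂).submatrix ⇑e ⇑e :=
        rfl
      rw [hstep, Matrix.submatrix_one_equiv e, hmat]
    rw [hsub1] at h1
    exact h1
  haveI hnon : Nonempty (Fin (r₁ * r₂)) := ⟨⟨0, Nat.mul_pos hr₁0 hr₂0⟩⟩
  constructor
  · rw [lamMin]
    exact le_ciInf fun i => eig_ge hQ hQlow i
  · rw [lamMax]
    refine ciSup_le fun i => ?_
    calc hQ.eigenvalues i ≤ C₁ * C₂ := eig_le hQ hQup i
      _ = (((n₁ - r₁) / d₁ + 1 : ℕ) : ℝ) * (((r₁ - 1) / d₁ : ℕ) + 1)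
          * ((((n₂ - r₂) / d₂ + 1 : ℕ) : ℝ) * (((r₂ - 1) / d₂ : ℕ) + 1)) := by
        rw [hC₁, hC₂]; push_cast; ring
end
end

section
/- Let P₁,…,P_k ∈ {0,1}^{r×n} be a patch structure such that patch 1 is disjoint from all other patches, i.e., P₁Pⱼᵀ = 0 for all j ≠ 1. Let α ∈ [0,1], f_w(x) = (1/k)·Σ_{i=1}^k σ_α(wᵀPᵢx), and let μ be a probability measure on ℝⁿ symmetric about the origin with covariance Σ = E_{x∼μ}[xxᵀ] equal to the identity matrix. Then for all w, w* ∈ ℝ^r, E_{x∼μ}[(f_{w*}(x) − f_w(x))·((w* − w)ᵀP₁x)] = ((1+α)/(2k))·‖w* − w‖². -/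
open MeasureTheory Matrix Finset
open scoped RealInnerProductSpace

noncomputable section

/-- Leaky ReLU activation with parameter `α`. -/
def lrelu (α z : ℝ) : ℝ := if 0 ≤ z then z else α * z

/-- A patch structure: each `P i` is a 0/1 matrix with exactly one 1 in each row
and at most one 1 in each column. -/
def IsPatchStruct {r n k : ℕ} (P : Fin k → Matrix (Fin r) (Fin n) ℝ) : Prop :=
  (∀ i a b, P i a b = 0 ∨ P i a b = 1) ∧
  (∀ i a, ∃! b, P i a b = 1) ∧
  (∀ i b a a', P i a b = 1 → P i a' b = 1 → a = a')

/-- View a plain vector as an element of Euclidean space. -/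
def toEuc {m : ℕ} (v : Fin m → ℝ) : EuclideanSpace ℝ (Fin m) := WithLp.toLp 2 v

/-- The one-hidden-layer convolutional network
`f_w(x) = (1/k) ∑ i, σ_α (wᵀ Pᵢ x)` with average pooling. -/
def convnet {r n k : ℕ} (α : ℝ) (P : Fin k → Matrix (Fin r) (Fin n) ℝ)
    (w : EuclideanSpace ℝ (Fin r)) (x : EuclideanSpace ℝ (Fin n)) : ℝ :=
  (1 / (k : ℝ)) * ∑ i, lrelu α ((w : Fin r → ℝ) ⬝ᵥ (P i).mulVec x)

/-- The (uncentered) covariance matrix `Σ = E_{x∼μ}[x xᵀ]`. -/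
def covMat {n : ℕ} (μ : Measure (EuclideanSpace ℝ (Fin n))) : Matrix (Fin n) (Fin n) ℝ :=
  Matrix.of fun i j => ∫ x, x i * x j ∂μ

/- ### Auxiliary lemmas -/

lemma lrelu_decomp (α z : ℝ) : lrelu α z = (1 + α) / 2 * z + (1 - α) / 2 * |z| := by
  unfold lrelu
  rcases le_or_gt 0 z with h | h
  · rw [if_pos h, abs_of_nonneg h]; ring
  · rw [if_neg (not_le.mpr h), abs_of_neg h]; ring

lemma coord_abs_le {n : ℕ} (x : EuclideanSpace ℝ (Fin n)) (j : Fin n) : |x j| ≤ ‖x‖ := by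
  rw [EuclideanSpace.norm_eq]
  have h1 : |x j| = Real.sqrt (‖x j‖ ^ 2) := by
    rw [Real.sqrt_sq_eq_abs, Real.norm_eq_abs, abs_abs]
  rw [h1]
  exact Real.sqrt_le_sqrt
    (Finset.single_le_sum (f := fun i => ‖x i‖ ^ 2) (fun i _ => by positivity) (mem_univ j))

lemma dot_continuous {n : ℕ} (c : Fin n → ℝ) :
    Continuous (fun x : EuclideanSpace ℝ (Fin n) => c ⬝ᵥ (x : Fin n → ℝ)) := by
  unfold dotProduct
  exact continuous_finset_sum _ fun j _ =>
    continuous_const.mul (EuclideanSpace.proj j).continuous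

lemma dot_abs_le {n : ℕ} (c : Fin n → ℝ) (x : EuclideanSpace ℝ (Fin n)) :
    |c ⬝ᵥ (x : Fin n → ℝ)| ≤ (∑ j, |c j|) * ‖x‖ := by
  calc |∑ j, c j * x j| ≤ ∑ j, |c j * x j| := Finset.abs_sum_le_sum_abs _ _
    _ ≤ ∑ j, |c j| * ‖x‖ := Finset.sum_le_sum fun j _ => by
        rw [abs_mul]; exact mul_le_mul_of_nonneg_left (coord_abs_le x j) (abs_nonneg _)
    _ = (∑ j, |c j|) * ‖x‖ := by rw [Finset.sum_mul]

lemma integ_of_quadbound {n : ℕ} (μ : Measure (EuclideanSpace ℝ (Fin n)))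
    (hmom : Integrable (fun x => ‖x‖ ^ 2) μ) (C : ℝ)
    (f : EuclideanSpace ℝ (Fin n) → ℝ) (hf : Continuous f)
    (hb : ∀ x, |f x| ≤ C * ‖x‖ ^ 2) : Integrable f μ :=
  (hmom.const_mul C).mono' hf.aestronglyMeasurable
    (ae_of_all _ fun x => by simpa [Real.norm_eq_abs] using hb x)

lemma integ_coord {n : ℕ} (μ : Measure (EuclideanSpace ℝ (Fin n)))
    (hmom : Integrable (fun x => ‖x‖ ^ 2) μ) (j l : Fin n) :
    Integrable (fun x => x j * x l) μ := by
  refine integ_of_quadbound μ hmom 1 _ ?_ ?_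
  · exact (EuclideanSpace.proj j).continuous.mul (EuclideanSpace.proj l).continuous
  · intro x
    rw [one_mul, abs_mul, pow_two]
    exact mul_le_mul (coord_abs_le x j) (coord_abs_le x l) (abs_nonneg _) (norm_nonneg _)

lemma integ_dotdot {n : ℕ} (μ : Measure (EuclideanSpace ℝ (Fin n)))
    (hmom : Integrable (fun x => ‖x‖ ^ 2) μ) (d e : Fin n → ℝ) :
    Integrable (fun x : EuclideanSpace ℝ (Fin n) => (d ⬝ᵥ (x : Fin n → ℝ)) * (e ⬝ᵥ (x : Fin n → ℝ))) μ := by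
  refine integ_of_quadbound μ hmom ((∑ j, |d j|) * (∑ j, |e j|)) _
    ((dot_continuous d).mul (dot_continuous e)) fun x => ?_
  rw [abs_mul]
  calc |d ⬝ᵥ (x : Fin n → ℝ)| * |e ⬝ᵥ (x : Fin n → ℝ)|
      ≤ ((∑ j, |d j|) * ‖x‖) * ((∑ j, |e j|) * ‖x‖) :=
        mul_le_mul (dot_abs_le d x) (dot_abs_le e x) (abs_nonneg _)
          (mul_nonneg (Finset.sum_nonneg fun j _ => abs_nonneg _) (norm_nonneg _))
    _ = (∑ j, |d j|) * (∑ j, |e j|) * ‖x‖ ^ 2 := by ring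

lemma integ_absdot {n : ℕ} (μ : Measure (EuclideanSpace ℝ (Fin n)))
    (hmom : Integrable (fun x => ‖x‖ ^ 2) μ) (a b e : Fin n → ℝ) :
    Integrable (fun x : EuclideanSpace ℝ (Fin n) =>
      (|a ⬝ᵥ (x : Fin n → ℝ)| - |b ⬝ᵥ (x : Fin n → ℝ)|) * (e ⬝ᵥ (x : Fin n → ℝ))) μ := by
  refine integ_of_quadbound μ hmom ((∑ j, |a j| + ∑ j, |b j|) * (∑ j, |e j|)) _
    (((dot_continuous a).abs.sub (dot_continuous b).abs).mul (dot_continuous e)) fun x => ?_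
  rw [abs_mul]
  have h1 : |(|a ⬝ᵥ (x : Fin n → ℝ)| - |b ⬝ᵥ (x : Fin n → ℝ)|)|
      ≤ (∑ j, |a j| + ∑ j, |b j|) * ‖x‖ := by
    have habs : |(|a ⬝ᵥ (x : Fin n → ℝ)| - |b ⬝ᵥ (x : Fin n → ℝ)|)|
        ≤ |a ⬝ᵥ (x : Fin n → ℝ)| + |b ⬝ᵥ (x : Fin n → ℝ)| := by
      simpa [Real.norm_eq_abs, abs_abs] using
        norm_sub_le (|a ⬝ᵥ (x : Fin n → ℝ)|) (|b ⬝ᵥ (x : Fin n → ℝ)|)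
    calc |(|a ⬝ᵥ (x : Fin n → ℝ)| - |b ⬝ᵥ (x : Fin n → ℝ)|)|
        ≤ |a ⬝ᵥ (x : Fin n → ℝ)| + |b ⬝ᵥ (x : Fin n → ℝ)| := habs
      _ ≤ (∑ j, |a j|) * ‖x‖ + (∑ j, |b j|) * ‖x‖ := add_le_add (dot_abs_le a x) (dot_abs_le b x)
      _ = (∑ j, |a j| + ∑ j, |b j|) * ‖x‖ := by ring
  calc |(|a ⬝ᵥ (x : Fin n → ℝ)| - |b ⬝ᵥ (x : Fin n → ℝ)|)| * |e ⬝ᵥ (x : Fin n → ℝ)|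
      ≤ ((∑ j, |a j| + ∑ j, |b j|) * ‖x‖) * ((∑ j, |e j|) * ‖x‖) :=
        mul_le_mul h1 (dot_abs_le e x) (abs_nonneg _)
          (mul_nonneg (by positivity) (norm_nonneg _))
    _ = (∑ j, |a j| + ∑ j, |b j|) * (∑ j, |e j|) * ‖x‖ ^ 2 := by ring

lemma integral_coord {n : ℕ} (μ : Measure (EuclideanSpace ℝ (Fin n)))
    (hcov : covMat μ = 1) (j l : Fin n) :
    ∫ x, x j * x l ∂μ = if j = l then (1 : ℝ) else 0 := by
  have h : covMat μ j l = (1 : Matrix (Fin n) (Fin n) ℝ) j l := by rw [hcov]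
  simpa [covMat, Matrix.one_apply] using h

lemma integral_dot_dot {n : ℕ} (μ : Measure (EuclideanSpace ℝ (Fin n)))
    (hmom : Integrable (fun x => ‖x‖ ^ 2) μ) (hcov : covMat μ = 1) (d e : Fin n → ℝ) :
    ∫ x, (d ⬝ᵥ (x : Fin n → ℝ)) * (e ⬝ᵥ (x : Fin n → ℝ)) ∂μ = d ⬝ᵥ e := by
  have hpt : ∀ x : EuclideanSpace ℝ (Fin n),
      (d ⬝ᵥ (x : Fin n → ℝ)) * (e ⬝ᵥ (x : Fin n → ℝ))
        = ∑ j, ∑ l, d j * e l * (x j * x l) := by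
    intro x
    rw [dotProduct, dotProduct, Finset.sum_mul_sum]
    exact Finset.sum_congr rfl fun j _ => Finset.sum_congr rfl fun l _ => by ring
  simp_rw [hpt]
  rw [integral_finset_sum _ (fun j _ => integrable_finset_sum _
    (fun l _ => (integ_coord μ hmom j l).const_mul _))]
  have hinner : ∀ j : Fin n, ∫ x, ∑ l, d j * e l * (x j * x l) ∂μ = d j * e j := by
    intro j
    rw [integral_finset_sum _ (fun l _ => (integ_coord μ hmom j l).const_mul _)]
    have : ∀ l : Fin n, ∫ x, d j * e l * (x j * x l) ∂μ
        = d j * e l * (if j = l then (1 : ℝ) else 0) := by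
      intro l
      rw [integral_const_mul, integral_coord μ hcov j l]
    simp_rw [this, mul_ite, mul_one, mul_zero]
    rw [Finset.sum_ite_eq]
    simp
  simp_rw [hinner]
  rfl

lemma integral_odd {n : ℕ} (μ : Measure (EuclideanSpace ℝ (Fin n)))
    (hsymm : μ.map (fun x => -x) = μ) (G : EuclideanSpace ℝ (Fin n) → ℝ)
    (hG : Integrable G μ) (hodd : ∀ x, G (-x) = -G x) : ∫ x, G x ∂μ = 0 := by
  have h1 : ∫ x, G x ∂μ = ∫ x, G (-x) ∂μ := by
    conv_lhs => rw [← hsymm]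
    rw [integral_map measurable_neg.aemeasurable]
    rw [hsymm]
    exact hG.aestronglyMeasurable
  have h2 : ∫ x, G (-x) ∂μ = - ∫ x, G x ∂μ := by
    simp_rw [hodd]
    exact integral_neg _
  linarith [h1, h2.symm.trans h1.symm]

lemma patch_self_mul {r n k : ℕ} (P : Fin k → Matrix (Fin r) (Fin n) ℝ)
    (hP : IsPatchStruct P) (i : Fin k) : P i * (P i)ᵀ = 1 := by
  obtain ⟨h01, hrow, hcol⟩ := hP
  ext a a'
  rw [Matrix.mul_apply, Matrix.one_apply]
  by_cases hA : a = a'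
  · subst hA
    rw [if_pos rfl]
    obtain ⟨b₀, hb₀, huniq⟩ := hrow i a
    rw [Finset.sum_eq_single b₀]
    · rw [Matrix.transpose_apply, hb₀, mul_one]
    · intro b _ hb
      rcases h01 i a b with h | h
      · rw [Matrix.transpose_apply, h, zero_mul]
      · exact absurd (huniq b h) hb
    · intro h; exact absurd (mem_univ b₀) h
  · rw [if_neg hA]
    refine Finset.sum_eq_zero fun b _ => ?_
    rw [Matrix.transpose_apply]
    rcases h01 i a b with h | h
    · rw [h, zero_mul]
    · rcases h01 i a' b with h' | h'
      · rw [h', mul_zero]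
      · exact absurd (hcol i b a a' h h') hA
/-- If patch 1 is disjoint from all other patches (`P₁Pⱼᵀ = 0` for
`j ≠ 1`) and `μ` is symmetric with identity covariance, then
`E[(f_{w*}(x) − f_w(x))·((w*−w)ᵀP₁x)] = ((1+α)/(2k))·‖w*−w‖²`. -/
theorem stmt18 {n r k : ℕ} (hk : 0 < k) (P : Fin k → Matrix (Fin r) (Fin n) ℝ)
    (hP : IsPatchStruct P)
    (hdisj : ∀ j : Fin k, j ≠ ⟨0, hk⟩ → P ⟨0, hk⟩ * (P j)ᵀ = 0)
    (α : ℝ) (hα : α ∈ Set.Icc (0 : ℝ) 1)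
    (μ : Measure (EuclideanSpace ℝ (Fin n))) [IsProbabilityMeasure μ]
    (hsymm : μ.map (fun x => -x) = μ)
    (hmom : Integrable (fun x => ‖x‖ ^ 2) μ)
    (hcov : covMat μ = 1)
    (w wstar : EuclideanSpace ℝ (Fin r)) :
    ∫ x, (convnet α P wstar x - convnet α P w x)
        * ((fun j => wstar j - w j) ⬝ᵥ (P ⟨0, hk⟩).mulVec x) ∂μ
      = (1 + α) / (2 * k) * ‖wstar - w‖ ^ 2 := by
  set z : Fin k := ⟨0, hk⟩ with hz
  set v : Fin r → ℝ := fun j => wstar j - w j with hv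
  set ds : Fin k → (Fin n → ℝ) := fun i => Matrix.vecMul (wstar : Fin r → ℝ) (P i) with hds
  set dw : Fin k → (Fin n → ℝ) := fun i => Matrix.vecMul (w : Fin r → ℝ) (P i) with hdw
  set d : Fin k → (Fin n → ℝ) := fun i => Matrix.vecMul v (P i) with hd
  have hveq : v = (wstar : Fin r → ℝ) - (w : Fin r → ℝ) := by funext j; simp [hv]
  have hdsub : ∀ i, d i = ds i - dw i := fun i => by
    rw [hd, hds, hdw, hveq]; exact Matrix.sub_vecMul (P i) _ _
  -- per-term functions
  set fterm : Fin k → EuclideanSpace ℝ (Fin n) → ℝ :=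
    fun i x => (1 + α) / 2 * ((d i ⬝ᵥ (x : Fin n → ℝ)) * (d z ⬝ᵥ (x : Fin n → ℝ))) with hft
  set gterm : Fin k → EuclideanSpace ℝ (Fin n) → ℝ :=
    fun i x => (1 - α) / 2 *
      ((|ds i ⬝ᵥ (x : Fin n → ℝ)| - |dw i ⬝ᵥ (x : Fin n → ℝ)|) * (d z ⬝ᵥ (x : Fin n → ℝ))) with hgt
  -- pointwise identity
  have hpt : ∀ x : EuclideanSpace ℝ (Fin n),
      (convnet α P wstar x - convnet α P w x) * (v ⬝ᵥ (P z).mulVec x)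
        = (1 / (k : ℝ)) * ((∑ i, fterm i x) + (∑ i, gterm i x)) := by
    intro x
    have hmv : ∀ (u : Fin r → ℝ) (i : Fin k),
        u ⬝ᵥ (P i).mulVec x = Matrix.vecMul u (P i) ⬝ᵥ (x : Fin n → ℝ) :=
      fun u i => Matrix.dotProduct_mulVec u (P i) x
    have hsplit : ∀ i, d i ⬝ᵥ (x : Fin n → ℝ)
        = ds i ⬝ᵥ (x : Fin n → ℝ) - dw i ⬝ᵥ (x : Fin n → ℝ) := fun i => by
      rw [hdsub i, sub_dotProduct]
    simp only [convnet, hmv, lrelu_decomp, hft, hgt, hsplit]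
    rw [← Finset.sum_add_distrib, ← mul_sub, ← Finset.sum_sub_distrib, mul_assoc,
      Finset.sum_mul, Finset.mul_sum, Finset.mul_sum]
    refine Finset.sum_congr rfl fun i _ => ?_
    simp only [hds, hdw, hveq, Matrix.sub_vecMul, sub_dotProduct]
    ring
  rw [integral_congr_ae (Filter.Eventually.of_forall hpt)]
  -- integrability
  have hfint : ∀ i ∈ Finset.univ (α := Fin k), Integrable (fterm i) μ := fun i _ =>
    (integ_dotdot μ hmom (d i) (d z)).const_mul _
  have hgint : ∀ i ∈ Finset.univ (α := Fin k), Integrable (gterm i) μ := fun i _ =>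
    (integ_absdot μ hmom (ds i) (dw i) (d z)).const_mul _
  have hFint : Integrable (fun x => ∑ i, fterm i x) μ := integrable_finset_sum _ hfint
  have hGint : Integrable (fun x => ∑ i, gterm i x) μ := integrable_finset_sum _ hgint
  rw [integral_const_mul, integral_add hFint hGint]
  -- the odd part vanishes
  have hgzero : ∫ x, ∑ i, gterm i x ∂μ = 0 := by
    rw [integral_finset_sum _ hgint]
    refine Finset.sum_eq_zero fun i _ => ?_
    refine integral_odd μ hsymm _ (hgint i (mem_univ i)) fun x => ?_
    have hneg : ∀ c : Fin n → ℝ, c ⬝ᵥ ((-x : EuclideanSpace ℝ (Fin n)) : Fin n → ℝ)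
        = -(c ⬝ᵥ (x : Fin n → ℝ)) := fun c => by
      have : ((-x : EuclideanSpace ℝ (Fin n)) : Fin n → ℝ) = -(x : Fin n → ℝ) := rfl
      rw [this, dotProduct_neg]
    simp only [hgt, hneg, abs_neg]
    ring
  -- the even part
  have hfval : ∫ x, ∑ i, fterm i x ∂μ = (1 + α) / 2 * ∑ i, d i ⬝ᵥ d z := by
    rw [integral_finset_sum _ hfint, Finset.mul_sum]
    refine Finset.sum_congr rfl fun i _ => ?_
    rw [hft]
    rw [integral_const_mul, integral_dot_dot μ hmom hcov (d i) (d z)]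
  -- the matrix computation
  have hterm : ∀ i, d i ⬝ᵥ d z = v ⬝ᵥ (P i * (P z)ᵀ).mulVec v := by
    intro i
    rw [← Matrix.mulVec_mulVec, Matrix.mulVec_transpose, Matrix.dotProduct_mulVec]
  have hnorm : v ⬝ᵥ v = ‖wstar - w‖ ^ 2 := by
    rw [EuclideanSpace.norm_eq, Real.sq_sqrt (Finset.sum_nonneg fun i _ => by positivity)]
    rw [dotProduct]
    refine Finset.sum_congr rfl fun j _ => ?_
    have hsub : (wstar - w) j = wstar j - w j := rfl
    rw [Real.norm_eq_abs, sq_abs, hsub, hv, pow_two]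
  have hsum : ∑ i, d i ⬝ᵥ d z = ‖wstar - w‖ ^ 2 := by
    rw [Finset.sum_eq_single z]
    · rw [hterm z, patch_self_mul P hP z, Matrix.one_mulVec, hnorm]
    · intro i _ hiz
      rw [hterm i]
      have h0 : P i * (P z)ᵀ = 0 := by
        have h := hdisj i hiz
        calc P i * (P z)ᵀ = (P z * (P i)ᵀ)ᵀ := by
              rw [Matrix.transpose_mul, Matrix.transpose_transpose]
          _ = 0 := by rw [h, Matrix.transpose_zero]
      rw [h0, Matrix.zero_mulVec, dotProduct_zero]
    · intro h; exact absurd (mem_univ z) h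
  rw [hgzero, hfval, hsum, add_zero]
  ring
end
end
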